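/- Let M = SE₂(3) × se₂(3) and let D = SE₂(3) ⋉ se₂(3) be the group of pairs (C, γ) with C ∈ SE₂(3), γ ∈ se₂(3) and product (C_X, γ_X)(C_Y, γ_Y) = (C_X C_Y, γ_X + C_X γ_Y C_X⁻¹). Then the map φ : D × M → M defined by φ((C, γ), (P, B)) = (P C, C⁻¹ (B − γ) C) is a transitive right group action of D on M. -/

import Mathlib

open Matrix

noncomputable section

abbrev V3 := Fin 3 → ℝ
abbrev Mat3 := Matrix (Fin 3) (Fin 3) ℝ
abbrev Mat5 := Matrix (Fin 5) (Fin 5) ℝ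

/-- `SO(3)`: real 3×3 matrices with `Rᵀ R = I` and `det R = 1`. -/
def SO3 (A : Mat3) : Prop := Aᵀ * A = 1 ∧ A.det = 1

/-- The 5×5 block matrix `[[A, a, b], [0, 1, 0], [0, 0, 1]]`. -/
def se23mk (A : Mat3) (a b : V3) : Mat5 :=
  Matrix.of fun i j =>
    if hi : (i : ℕ) < 3 then
      if hj : (j : ℕ) < 3 then A ⟨(i : ℕ), hi⟩ ⟨(j : ℕ), hj⟩
      else if (j : ℕ) = 3 then a ⟨(i : ℕ), hi⟩ else b ⟨(i : ℕ), hi⟩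
    else if (i : ℕ) = (j : ℕ) then 1 else 0

/-- `SE₂(3)`: 5×5 block matrices `[[A, a, b], [0, 1, 0], [0, 0, 1]]` with `A ∈ SO(3)`. -/
def SE23 (C : Mat5) : Prop := ∃ (A : Mat3) (a b : V3), SO3 A ∧ C = se23mk A a b

/-- `x^∧`: the 3×3 skew-symmetric matrix with `x^∧ y = x × y`. -/
def wedge (x : V3) : Mat3 :=
  !![0, -x 2, x 1; x 2, 0, -x 0; -x 1, x 0, 0]

/-- The 5×5 block matrix `[[ω^∧, u, v], [0, 0, 0], [0, 0, 0]]`. -/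
def se23algMk (ω u v : V3) : Mat5 :=
  Matrix.of fun i j =>
    if hi : (i : ℕ) < 3 then
      if hj : (j : ℕ) < 3 then wedge ω ⟨(i : ℕ), hi⟩ ⟨(j : ℕ), hj⟩
      else if (j : ℕ) = 3 then u ⟨(i : ℕ), hi⟩ else v ⟨(i : ℕ), hi⟩
    else 0

/-- `se₂(3)`: 5×5 block matrices `[[ω^∧, u, v], [0, 0, 0], [0, 0, 0]]`. -/
def se23Alg (M : Mat5) : Prop := ∃ ω u v : V3, M = se23algMk ω u v

/-- The product of the Tangent group `D = SE₂(3) ⋉ se₂(3)`: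
`(C_X, γ_X)(C_Y, γ_Y) = (C_X C_Y, γ_X + C_X γ_Y C_X⁻¹)`. -/
def tgMul (X Y : Mat5 × Mat5) : Mat5 × Mat5 :=
  (X.1 * Y.1, X.2 + X.1 * Y.2 * X.1⁻¹)

/-- The action `φ((C, γ), (P, B)) = (P C, C⁻¹ (B − γ) C)` of `D = SE₂(3) ⋉ se₂(3)`
on `M = SE₂(3) × se₂(3)`. -/
def phiTG (C γ P B : Mat5) : Mat5 × Mat5 := (P * C, C⁻¹ * (B - γ) * C)

/- ### auxiliary machinery -/


set_option maxHeartbeats 1000000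
set_option maxRecDepth 10000

def genMk (M : Mat3) (u v : V3) : Mat5 :=
  Matrix.of fun i j =>
    if hi : (i : ℕ) < 3 then
      if hj : (j : ℕ) < 3 then M ⟨(i : ℕ), hi⟩ ⟨(j : ℕ), hj⟩
      else if (j : ℕ) = 3 then u ⟨(i : ℕ), hi⟩ else v ⟨(i : ℕ), hi⟩
    else 0

@[simp] lemma fv50 : ((0 : Fin 5) : ℕ) = 0 := rfl
@[simp] lemma fv51 : ((1 : Fin 5) : ℕ) = 1 := rfl
@[simp] lemma fv52 : ((2 : Fin 5) : ℕ) = 2 := rfl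
@[simp] lemma fv53 : ((3 : Fin 5) : ℕ) = 3 := rfl
@[simp] lemma fv54 : ((4 : Fin 5) : ℕ) = 4 := rfl
@[simp] lemma fm30 (h : (0:ℕ) < 3) : (⟨0, h⟩ : Fin 3) = 0 := rfl
@[simp] lemma fm31 (h : (1:ℕ) < 3) : (⟨1, h⟩ : Fin 3) = 1 := rfl
@[simp] lemma fm32 (h : (2:ℕ) < 3) : (⟨2, h⟩ : Fin 3) = 2 := rfl

lemma mk_one : se23mk 1 0 0 = (1 : Mat5) := by
  ext i j
  simp only [se23mk, Matrix.of_apply]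
  fin_cases i <;> fin_cases j <;> simp [Matrix.one_apply, Fin.ext_iff]

lemma mk_mul_mk (A A' : Mat3) (a b a' b' : V3) :
    se23mk A a b * se23mk A' a' b' = se23mk (A * A') (A.mulVec a' + a) (A.mulVec b' + b) := by
  ext i j
  simp only [se23mk, Matrix.mul_apply, Matrix.of_apply, Fin.sum_univ_five]
  fin_cases i <;> fin_cases j <;>
    simp [Matrix.mul_apply, Matrix.mulVec, dotProduct, Fin.sum_univ_three]

lemma mk_mul_gen (A : Mat3) (a b : V3) (M : Mat3) (u v : V3) :
    se23mk A a b * genMk M u v = genMk (A * M) (A.mulVec u) (A.mulVec v) := by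
  ext i j
  simp only [se23mk, genMk, Matrix.mul_apply, Matrix.of_apply, Fin.sum_univ_five]
  fin_cases i <;> fin_cases j <;>
    simp [Matrix.mul_apply, Matrix.mulVec, dotProduct, Fin.sum_univ_three]

lemma gen_mul_mk (M : Mat3) (u v : V3) (A : Mat3) (a b : V3) :
    genMk M u v * se23mk A a b = genMk (M * A) (M.mulVec a + u) (M.mulVec b + v) := by
  ext i j
  simp only [se23mk, genMk, Matrix.mul_apply, Matrix.of_apply, Fin.sum_univ_five]
  fin_cases i <;> fin_cases j <;>
    simp [Matrix.mul_apply, Matrix.mulVec, dotProduct, Fin.sum_univ_three]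

lemma gen_sub (M M' : Mat3) (u v u' v' : V3) :
    genMk M u v - genMk M' u' v' = genMk (M - M') (u - u') (v - v') := by
  ext i j
  simp only [genMk, Matrix.sub_apply, Matrix.of_apply, Pi.sub_apply]
  fin_cases i <;> fin_cases j <;> simp

/-- alternate description of `se23Alg` via skew-symmetric top-left block. -/
def se23Alg' (M : Mat5) : Prop := ∃ (S : Mat3) (u v : V3), Sᵀ = -S ∧ M = genMk S u v

lemma algMk_eq_gen (ω u v : V3) : se23algMk ω u v = genMk (wedge ω) u v := rfl

lemma wedge_skew (x : V3) : (wedge x)ᵀ = -(wedge x) := by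
  ext i j
  fin_cases i <;> fin_cases j <;> simp [wedge]

lemma skew_eq_wedge (S : Mat3) (h : Sᵀ = -S) : S = wedge ![S 2 1, S 0 2, S 1 0] := by
  have h' : ∀ i j, S j i = -S i j := by
    intro i j
    have := congrFun (congrFun h i) j
    simpa [Matrix.transpose_apply, Matrix.neg_apply] using this
  ext i j
  fin_cases i <;> fin_cases j <;>
    simp [wedge] <;>
    first
      | linarith [h' 0 0]
      | linarith [h' 1 1]
      | linarith [h' 2 2]
      | linarith [h' 0 1]
      | linarith [h' 0 2]
      | linarith [h' 1 2]

lemma alg_iff (M : Mat5) : se23Alg M ↔ se23Alg' M := by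
  constructor
  · rintro ⟨ω, u, v, rfl⟩
    exact ⟨wedge ω, u, v, wedge_skew ω, algMk_eq_gen ω u v⟩
  · rintro ⟨S, u, v, hS, rfl⟩
    exact ⟨![S 2 1, S 0 2, S 1 0], u, v, by rw [algMk_eq_gen, ← skew_eq_wedge S hS]⟩

lemma SO3.mul {A B : Mat3} (hA : SO3 A) (hB : SO3 B) : SO3 (A * B) := by
  constructor
  · rw [Matrix.transpose_mul]
    calc Bᵀ * Aᵀ * (A * B) = Bᵀ * (Aᵀ * A) * B := by noncomm_ring
    _ = 1 := by rw [hA.1, mul_one, hB.1]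
  · rw [Matrix.det_mul, hA.2, hB.2, mul_one]

lemma SO3.transpose {A : Mat3} (hA : SO3 A) : SO3 Aᵀ := by
  refine ⟨?_, by rw [Matrix.det_transpose]; exact hA.2⟩
  rw [Matrix.transpose_transpose]
  exact mul_eq_one_comm.mp hA.1

lemma mk_mul_inv {A : Mat3} (hA : SO3 A) (a b : V3) :
    se23mk A a b * se23mk Aᵀ (-(Aᵀ.mulVec a)) (-(Aᵀ.mulVec b)) = 1 := by
  have hAAt : A * Aᵀ = 1 := mul_eq_one_comm.mp hA.1
  rw [mk_mul_mk, hAAt]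
  simp only [Matrix.mulVec_neg, Matrix.mulVec_mulVec, hAAt, Matrix.one_mulVec,
    neg_add_cancel]
  exact mk_one

lemma inv_mk {A : Mat3} (hA : SO3 A) (a b : V3) :
    (se23mk A a b)⁻¹ = se23mk Aᵀ (-(Aᵀ.mulVec a)) (-(Aᵀ.mulVec b)) :=
  Matrix.inv_eq_right_inv (mk_mul_inv hA a b)

lemma SE23.isUnit_det {C : Mat5} (hC : SE23 C) : IsUnit C.det := by
  obtain ⟨A, a, b, hA, rfl⟩ := hC
  have h := mk_mul_inv hA a b
  have := congrArg Matrix.det h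
  rw [Matrix.det_mul, Matrix.det_one] at this
  exact IsUnit.of_mul_eq_one _ this

lemma SE23.mul {C D : Mat5} (hC : SE23 C) (hD : SE23 D) : SE23 (C * D) := by
  obtain ⟨A, a, b, hA, rfl⟩ := hC
  obtain ⟨A', a', b', hA', rfl⟩ := hD
  exact ⟨A * A', _, _, hA.mul hA', mk_mul_mk A A' a b a' b'⟩

lemma SE23.inv {C : Mat5} (hC : SE23 C) : SE23 C⁻¹ := by
  obtain ⟨A, a, b, hA, rfl⟩ := hC
  rw [inv_mk hA]
  exact ⟨Aᵀ, _, _, hA.transpose, rfl⟩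

lemma SE23.mul_inv_cancel {C : Mat5} (hC : SE23 C) : C * C⁻¹ = 1 :=
  Matrix.mul_nonsing_inv C hC.isUnit_det

lemma SE23.inv_mul_cancel {C : Mat5} (hC : SE23 C) : C⁻¹ * C = 1 :=
  Matrix.nonsing_inv_mul C hC.isUnit_det

lemma conj_alg' {C γ : Mat5} (hC : SE23 C) (hγ : se23Alg' γ) :
    se23Alg' (C * γ * C⁻¹) := by
  obtain ⟨A, a, b, hA, rfl⟩ := hC
  obtain ⟨S, u, v, hS, rfl⟩ := hγ
  rw [inv_mk hA, mk_mul_gen, gen_mul_mk]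
  refine ⟨A * S * Aᵀ, _, _, ?_, rfl⟩
  rw [Matrix.transpose_mul, Matrix.transpose_mul, Matrix.transpose_transpose, hS]
  noncomm_ring

lemma inv_conj_alg' {C γ : Mat5} (hC : SE23 C) (hγ : se23Alg' γ) :
    se23Alg' (C⁻¹ * γ * C) := by
  have h := conj_alg' hC.inv hγ
  rwa [Matrix.nonsing_inv_nonsing_inv C hC.isUnit_det] at h

lemma alg'_sub {γ δ : Mat5} (hγ : se23Alg' γ) (hδ : se23Alg' δ) : se23Alg' (γ - δ) := by
  obtain ⟨S, u, v, hS, rfl⟩ := hγ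
  obtain ⟨S', u', v', hS', rfl⟩ := hδ
  rw [gen_sub]
  refine ⟨S - S', _, _, ?_, rfl⟩
  rw [Matrix.transpose_sub, hS, hS']
  abel


/-- `φ` is a transitive right group action of `D = SE₂(3) ⋉ se₂(3)` on
`M = SE₂(3) × se₂(3)`. -/
theorem stmt6 :
    -- φ maps M into M
    (∀ (C γ P B : Mat5), SE23 C → se23Alg γ → SE23 P → se23Alg B →
      SE23 (phiTG C γ P B).1 ∧ se23Alg (phiTG C γ P B).2) ∧
    -- identity axiom: φ((I₅, 0), ξ) = ξ
    (∀ (P B : Mat5), phiTG 1 0 P B = (P, B)) ∧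
    -- compatibility axiom: φ(X, φ(Y, ξ)) = φ(Y X, ξ)
    (∀ (CX γX CY γY P B : Mat5),
      SE23 CX → se23Alg γX → SE23 CY → se23Alg γY → SE23 P → se23Alg B →
      phiTG CX γX (phiTG CY γY P B).1 (phiTG CY γY P B).2
        = phiTG (tgMul (CY, γY) (CX, γX)).1 (tgMul (CY, γY) (CX, γX)).2 P B) ∧
    -- transitivity
    (∀ (P₁ B₁ P₂ B₂ : Mat5), SE23 P₁ → se23Alg B₁ → SE23 P₂ → se23Alg B₂ →
      ∃ (C γ : Mat5), SE23 C ∧ se23Alg γ ∧ phiTG C γ P₁ B₁ = (P₂, B₂)) := by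
  refine ⟨?_, ?_, ?_, ?_⟩
  · -- maps into M
    intro C γ P B hC hγ hP hB
    constructor
    · exact hP.mul hC
    · rw [alg_iff] at hγ hB ⊢
      exact inv_conj_alg' hC (alg'_sub hB hγ)
  · -- identity
    intro P B
    simp [phiTG]
  · -- compatibility
    intro CX γX CY γY P B hCX _ hCY _ _ _
    have hYi : CY⁻¹ * CY = 1 := hCY.inv_mul_cancel
    simp only [phiTG, tgMul, Prod.mk.injEq]
    constructor
    · rw [mul_assoc]
    · rw [Matrix.mul_inv_rev]
      have cancel : CY⁻¹ * (CY * γX * CY⁻¹) * CY = γX := by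
        calc CY⁻¹ * (CY * γX * CY⁻¹) * CY
            = (CY⁻¹ * CY) * γX * (CY⁻¹ * CY) := by noncomm_ring
          _ = γX := by rw [hYi, one_mul, mul_one]
      have key : CY⁻¹ * (B - γY) * CY - γX
          = CY⁻¹ * (B - (γY + CY * γX * CY⁻¹)) * CY := by
        conv_lhs => rw [← cancel]
        noncomm_ring
      rw [key]
      noncomm_ring
  · -- transitivity
    intro P₁ B₁ P₂ B₂ hP₁ hB₁ hP₂ hB₂
    refine ⟨P₁⁻¹ * P₂, B₁ - (P₁⁻¹ * P₂) * B₂ * (P₁⁻¹ * P₂)⁻¹, hP₁.inv.mul hP₂, ?_, ?_⟩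
    · rw [alg_iff] at hB₁ hB₂ ⊢
      exact alg'_sub hB₁ (conj_alg' (hP₁.inv.mul hP₂) hB₂)
    · have hC : SE23 (P₁⁻¹ * P₂) := hP₁.inv.mul hP₂
      have h1 : (P₁⁻¹ * P₂)⁻¹ * (P₁⁻¹ * P₂) = 1 := hC.inv_mul_cancel
      have h2 : (P₁⁻¹ * P₂) * (P₁⁻¹ * P₂)⁻¹ = 1 := hC.mul_inv_cancel
      simp only [phiTG, Prod.mk.injEq]
      constructor
      · rw [← mul_assoc, hP₁.mul_inv_cancel, one_mul]
      · have : B₁ - (B₁ - (P₁⁻¹ * P₂) * B₂ * (P₁⁻¹ * P₂)⁻¹)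
            = (P₁⁻¹ * P₂) * B₂ * (P₁⁻¹ * P₂)⁻¹ := by abel
        rw [this]
        calc (P₁⁻¹ * P₂)⁻¹ * ((P₁⁻¹ * P₂) * B₂ * (P₁⁻¹ * P₂)⁻¹) * (P₁⁻¹ * P₂)
            = ((P₁⁻¹ * P₂)⁻¹ * (P₁⁻¹ * P₂)) * B₂ * ((P₁⁻¹ * P₂)⁻¹ * (P₁⁻¹ * P₂)) := by
              noncomm_ring
          _ = B₂ := by rw [h1, one_mul, mul_one]
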